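/- arXiv:2602.04134 — 7 statements merged into one kernel-verified Lean document; each statement's English description precedes it below -/
import Mathlib

section
/- (Mixed Schwarz inequality) For every bounded linear operator A on a complex Hilbert space H and every unit vector x ∈ H, |⟨Ax, x⟩|² ≤ ⟨|A|x, x⟩ · ⟨|A*|x, x⟩, where |A| = (A*A)^{1/2} and |A*| = (AA*)^{1/2}. -/
open ContinuousLinearMap

/-- The numerical radius of a bounded operator. -/
noncomputable def numRad {H : Type*} [NormedAddCommGroup H] [InnerProductSpace ℂ H]
    (A : H →L[ℂ] H) : ℝ :=
  sSup {r : ℝ | ∃ x : H, ‖x‖ = 1 ∧ r = ‖(inner ℂ (A x) x : ℂ)‖}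

open ContinuousLinearMap in
/-- Key abstract lemma: if `T` is self-adjoint and `D` is a positive operator with
`D * D = T * T` (i.e. `D = |T|`), then `‖⟪T u, v⟫‖² ≤ ⟪D u, u⟫ ⟪D v, v⟫`. -/
private lemma key_mixed_schwarz {E : Type*} [NormedAddCommGroup E] [InnerProductSpace ℂ E]
    [CompleteSpace E] (T D : E →L[ℂ] E) (hT : IsSelfAdjoint T) (hD : D.IsPositive)
    (h2 : D * D = T * T) (u v : E) :
    ‖(inner ℂ (T u) v : ℂ)‖ ^ 2 ≤ (inner ℂ (D u) u : ℂ).re * (inner ℂ (D v) v : ℂ).re := by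
  have hD0 : (0 : E →L[ℂ] E) ≤ D := (nonneg_iff_isPositive D).mpr hD
  -- `D` is the absolute value of `T` in the sense of the continuous functional calculus
  have habsD : cfc (fun t : ℝ => |t|) T = D := by
    have h1 : (0 : E →L[ℂ] E) ≤ cfc (fun t : ℝ => |t|) T :=
      cfc_nonneg (fun x _ => abs_nonneg x)
    have h3 : cfc (fun t : ℝ => |t|) T * cfc (fun t : ℝ => |t|) T = T * T := by
      rw [← cfc_mul _ _ T (by fun_prop) (by fun_prop)]
      calc cfc (fun t : ℝ => |t| * |t|) T = cfc (fun t : ℝ => t * t) T :=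
            cfc_congr (fun t _ => abs_mul_abs_self t)
        _ = T * T := by
            rw [cfc_mul _ _ T (by fun_prop) (by fun_prop), cfc_id' ℝ T]
    exact (CFC.sqrt_unique h3 h1).symm.trans (CFC.sqrt_unique h2 hD0)
  have hsymmD := isSelfAdjoint_iff_isSymmetric.mp hD.isSelfAdjoint
  -- comparison of quadratic forms
  have hle : ∀ W : E →L[ℂ] E, W ≤ D → ∀ w : E,
      (inner ℂ (W w) w : ℂ).re ≤ (inner ℂ (D w) w : ℂ).re := by
    intro W hW w
    have h := ((le_def W D).mp hW).inner_nonneg_left w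
    simp only [sub_apply, inner_sub_left, map_sub, sub_nonneg, RCLike.re_to_complex] at h
    have h' := (Complex.le_def.mp h).1; simp only [Complex.zero_re, Complex.sub_re, sub_nonneg] at h'; exact h'
  have main : ∀ ε : ℝ, 0 < ε →
      ‖(inner ℂ (T u) v : ℂ)‖ ^ 2 ≤
        (inner ℂ (D u) u : ℂ).re * ((inner ℂ (D v) v : ℂ).re + ε * ‖v‖ ^ 2) := by
    intro ε hε
    have hpos : ∀ t : ℝ, 0 < |t| + ε := fun t => by positivity
    have hsne : ∀ t : ℝ, Real.sqrt (|t| + ε) ≠ 0 :=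
      fun t => (Real.sqrt_pos.mpr (hpos t)).ne'
    set g : ℝ → ℝ := fun t => t / Real.sqrt (|t| + ε) with hgdef
    set h : ℝ → ℝ := fun t => Real.sqrt (|t| + ε) with hhdef
    have hgc : Continuous g := by
      apply Continuous.div continuous_id (by fun_prop)
      exact hsne
    have hhc : Continuous h := by fun_prop
    set G := cfc g T with hGdef
    set Hh := cfc h T with hHdef
    have hGsa : IsSelfAdjoint G := cfc_predicate g T
    have hHsa : IsSelfAdjoint Hh := cfc_predicate h T
    have hGsymm := isSelfAdjoint_iff_isSymmetric.mp hGsa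
    have hHsymm := isSelfAdjoint_iff_isSymmetric.mp hHsa
    have hmul : Hh * G = T := by
      rw [hGdef, hHdef, ← cfc_mul _ _ T hhc.continuousOn hgc.continuousOn]
      calc cfc (fun t => h t * g t) T = cfc (fun t : ℝ => t) T := by
            refine cfc_congr fun t _ => ?_
            simp only [hgdef, hhdef]
            rw [mul_comm]
            exact div_mul_cancel₀ t (hsne t)
        _ = T := cfc_id' ℝ T
    -- ⟪T u, v⟫ = ⟪G u, Hh v⟫
    have hinner : (inner ℂ (T u) v : ℂ) = inner ℂ (G u) (Hh v) := by
      have hTu : T u = Hh (G u) := by rw [← hmul]; rfl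
      rw [hTu]
      exact hHsymm (G u) v
    have hcs : ‖(inner ℂ (T u) v : ℂ)‖ ≤ ‖G u‖ * ‖Hh v‖ := by
      rw [hinner]; exact norm_inner_le_norm _ _
    -- ‖G u‖² ≤ re ⟪D u, u⟫
    have hGu : ‖G u‖ ^ 2 ≤ (inner ℂ (D u) u : ℂ).re := by
      have h1 : (‖G u‖ : ℝ) ^ 2 = (inner ℂ ((cfc (fun t => g t * g t) T) u) u : ℂ).re := by
        rw [← @inner_self_eq_norm_sq ℂ, RCLike.re_to_complex]
        have : (inner ℂ (G u) (G u) : ℂ) = inner ℂ (G (G u)) u := (hGsymm (G u) u).symm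
        rw [this, cfc_mul _ _ T hgc.continuousOn hgc.continuousOn]
        rfl
      rw [h1]
      refine hle _ ?_ u
      rw [← habsD]
      refine cfc_mono (fun t _ => ?_) (by fun_prop) (by fun_prop)
      simp only [hgdef]
      rw [div_mul_div_comm, Real.mul_self_sqrt (hpos t).le]
      rw [div_le_iff₀ (hpos t)]
      nlinarith [abs_nonneg t, abs_mul_abs_self t, abs_nonneg t]
    -- ‖Hh v‖² = re ⟪D v, v⟫ + ε ‖v‖²
    have hHv : ‖Hh v‖ ^ 2 = (inner ℂ (D v) v : ℂ).re + ε * ‖v‖ ^ 2 := by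
      have h1 : (‖Hh v‖ : ℝ) ^ 2 = (inner ℂ ((cfc (fun t => h t * h t) T) v) v : ℂ).re := by
        rw [← @inner_self_eq_norm_sq ℂ, RCLike.re_to_complex]
        have : (inner ℂ (Hh v) (Hh v) : ℂ) = inner ℂ (Hh (Hh v)) v := (hHsymm (Hh v) v).symm
        rw [this, cfc_mul _ _ T hhc.continuousOn hhc.continuousOn]
        rfl
      have h2' : cfc (fun t => h t * h t) T = D + algebraMap ℝ (E →L[ℂ] E) ε := by
        have : (fun t : ℝ => h t * h t) = fun t : ℝ => |t| + ε := by
          funext t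
          simp only [hhdef]
          exact Real.mul_self_sqrt (hpos t).le
        rw [this, cfc_add T _ _ (by fun_prop) (by fun_prop), habsD, cfc_const ε T]
      rw [h1, h2']
      simp only [add_apply, inner_add_left, Complex.add_re]
      congr 1
      rw [Algebra.algebraMap_eq_smul_one]
      simp only [smul_apply, one_apply_eq_self]
      have hs : (inner ℂ (ε • v) v : ℂ) = (ε : ℂ) * inner ℂ v v := by
        rw [RCLike.real_smul_eq_coe_smul (K := ℂ), inner_smul_left]
        simp
      rw [hs, ← inner_self_eq_norm_sq (𝕜 := ℂ) v]
      simp [Complex.mul_re, RCLike.re_to_complex]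
    calc ‖(inner ℂ (T u) v : ℂ)‖ ^ 2 ≤ (‖G u‖ * ‖Hh v‖) ^ 2 := by
          exact pow_le_pow_left₀ (norm_nonneg _) hcs 2
      _ = ‖G u‖ ^ 2 * ‖Hh v‖ ^ 2 := by ring
      _ ≤ (inner ℂ (D u) u : ℂ).re * ‖Hh v‖ ^ 2 :=
          mul_le_mul_of_nonneg_right hGu (sq_nonneg _)
      _ = (inner ℂ (D u) u : ℂ).re * ((inner ℂ (D v) v : ℂ).re + ε * ‖v‖ ^ 2) := by rw [hHv]
  -- take ε → 0
  have ha : 0 ≤ (inner ℂ (D u) u : ℂ).re := by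
    have := hD.inner_nonneg_left u
    exact (Complex.le_def.mp this).1
  set a := (inner ℂ (D u) u : ℂ).re
  set b := (inner ℂ (D v) v : ℂ).re
  refine le_of_forall_pos_le_add fun δ hδ => ?_
  have hKpos : (0:ℝ) < a * ‖v‖ ^ 2 + 1 := by positivity
  have hε : 0 < δ / (a * ‖v‖ ^ 2 + 1) := div_pos hδ hKpos
  calc ‖(inner ℂ (T u) v : ℂ)‖ ^ 2
      ≤ a * (b + δ / (a * ‖v‖ ^ 2 + 1) * ‖v‖ ^ 2) := main _ hε
    _ = a * b + δ * ((a * ‖v‖ ^ 2) / (a * ‖v‖ ^ 2 + 1)) := by ring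
    _ ≤ a * b + δ * 1 := by
        have h1 : (a * ‖v‖ ^ 2) / (a * ‖v‖ ^ 2 + 1) ≤ 1 :=
          (div_le_one hKpos).mpr (by nlinarith)
        have := mul_le_mul_of_nonneg_left h1 hδ.le
        linarith
    _ = a * b + δ := by ring

/-- Mixed Schwarz inequality: P = |A|, Q = |A*| are the positive square roots. -/
theorem mixed_schwarz {H : Type*} [NormedAddCommGroup H] [InnerProductSpace ℂ H]
    [CompleteSpace H] (A P Q : H →L[ℂ] H)
    (hP : P.IsPositive) (hP2 : P * P = adjoint A * A)
    (hQ : Q.IsPositive) (hQ2 : Q * Q = A * adjoint A)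
    (x : H) (hx : ‖x‖ = 1) :
    ‖(inner ℂ (A x) x : ℂ)‖ ^ 2 ≤ (inner ℂ (P x) x : ℂ).re * (inner ℂ (Q x) x : ℂ).re := by
  classical
  set L : WithLp 2 (H × H) ≃L[ℂ] H × H := WithLp.prodContinuousLinearEquiv 2 ℂ H H with hL
  set T : WithLp 2 (H × H) →L[ℂ] WithLp 2 (H × H) :=
    L.symm.toContinuousLinearMap ∘L
      (((adjoint A) ∘L ContinuousLinearMap.snd ℂ H H).prod
        (A ∘L ContinuousLinearMap.fst ℂ H H)) ∘L L.toContinuousLinearMap with hT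
  set D : WithLp 2 (H × H) →L[ℂ] WithLp 2 (H × H) :=
    L.symm.toContinuousLinearMap ∘L
      ((P ∘L ContinuousLinearMap.fst ℂ H H).prod
        (Q ∘L ContinuousLinearMap.snd ℂ H H)) ∘L L.toContinuousLinearMap with hD
  have hTapp : ∀ w : WithLp 2 (H × H), T w = L.symm (adjoint A w.snd, A w.fst) := by
    intro w; rfl
  have hDapp : ∀ w : WithLp 2 (H × H), D w = L.symm (P w.fst, Q w.snd) := by
    intro w; rfl
  have hLsymm_fst : ∀ z : H × H, ((L.symm z : WithLp 2 (H × H))).fst = z.1 := fun z => rfl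
  have hLsymm_snd : ∀ z : H × H, ((L.symm z : WithLp 2 (H × H))).snd = z.2 := fun z => rfl
  have hTsa : IsSelfAdjoint T := by
    rw [isSelfAdjoint_iff_isSymmetric]
    intro w z
    show (inner ℂ (T w) z : ℂ) = inner ℂ w (T z)
    simp only [hTapp, WithLp.prod_inner_apply, WithLp.ofLp_fst, WithLp.ofLp_snd, hLsymm_fst, hLsymm_snd]
    rw [adjoint_inner_left, ← adjoint_inner_right (A := A)]
    ring
  have hPsymm := isSelfAdjoint_iff_isSymmetric.mp hP.isSelfAdjoint
  have hQsymm := isSelfAdjoint_iff_isSymmetric.mp hQ.isSelfAdjoint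
  have hDpos : D.IsPositive := by
    constructor
    · intro w z
      show (inner ℂ (D w) z : ℂ) = inner ℂ w (D z)
      simp only [hDapp, WithLp.prod_inner_apply, WithLp.ofLp_fst, WithLp.ofLp_snd, hLsymm_fst, hLsymm_snd]
      exact congrArg₂ (· + ·) (hPsymm w.fst z.fst) (hQsymm w.snd z.snd)
    · intro w
      have h1 := hP.inner_nonneg_left w.fst
      have h2 := hQ.inner_nonneg_left w.snd
      show (0:ℝ) ≤ RCLike.re (inner ℂ (D w) w : ℂ)
      simp only [hDapp, WithLp.prod_inner_apply, WithLp.ofLp_fst, WithLp.ofLp_snd, hLsymm_fst, hLsymm_snd, map_add]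
      exact add_nonneg (Complex.le_def.mp h1).1 (Complex.le_def.mp h2).1
  have hDT : D * D = T * T := by
    ext w
    show D (D w) = T (T w)
    simp only [hDapp, hTapp, hLsymm_fst, hLsymm_snd]
    have e1 : P (P w.fst) = adjoint A (A w.fst) := by
      have := DFunLike.congr_fun hP2 w.fst
      simpa [mul_apply] using this
    have e2 : Q (Q w.snd) = A (adjoint A w.snd) := by
      have := DFunLike.congr_fun hQ2 w.snd
      simpa [mul_apply] using this
    rw [e1, e2]
  have key := key_mixed_schwarz T D hTsa hDpos hDT (L.symm (x, 0)) (L.symm (0, x))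
  have hu1 : ((L.symm (x, 0) : WithLp 2 (H × H))).fst = x := rfl
  have hu2 : ((L.symm (x, 0) : WithLp 2 (H × H))).snd = (0 : H) := rfl
  have hv1 : ((L.symm (0, x) : WithLp 2 (H × H))).fst = (0 : H) := rfl
  have hv2 : ((L.symm (0, x) : WithLp 2 (H × H))).snd = x := rfl
  have e1 : (inner ℂ (T (L.symm (x, 0))) (L.symm (0, x)) : ℂ) = inner ℂ (A x) x := by
    simp only [hTapp, WithLp.prod_inner_apply, WithLp.ofLp_fst, WithLp.ofLp_snd, hLsymm_fst, hLsymm_snd, hu1, hu2, hv1, hv2]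
    simp
  have e2 : (inner ℂ (D (L.symm (x, 0))) (L.symm (x, 0)) : ℂ) = inner ℂ (P x) x := by
    simp only [hDapp, WithLp.prod_inner_apply, WithLp.ofLp_fst, WithLp.ofLp_snd, hLsymm_fst, hLsymm_snd, hu1, hu2]
    simp
  have e3 : (inner ℂ (D (L.symm (0, x))) (L.symm (0, x)) : ℂ) = inner ℂ (Q x) x := by
    simp only [hDapp, WithLp.prod_inner_apply, WithLp.ofLp_fst, WithLp.ofLp_snd, hLsymm_fst, hLsymm_snd, hv1, hv2]
    simp
  rwa [e1, e2, e3] at key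
end

section
/- (Kittaneh's inequality) For every bounded linear operator A on a complex Hilbert space, w(A)² ≤ (1/2)‖ |A|² + |A*|² ‖ = (1/2)‖A*A + AA*‖. -/
open ContinuousLinearMap

theorem kittaneh {H : Type*} [NormedAddCommGroup H] [InnerProductSpace ℂ H]
    [CompleteSpace H] (A : H →L[ℂ] H) :
    numRad A ^ 2 ≤ (1 / 2) * ‖adjoint A * A + A * adjoint A‖ := by
  set T := adjoint A * A + A * adjoint A with hT
  have hC : (0:ℝ) ≤ (1/2) * ‖T‖ := by positivity
  have key : ∀ x : H, ‖x‖ = 1 → ‖(inner ℂ (A x) x : ℂ)‖ ^ 2 ≤ (1/2) * ‖T‖ := by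
    intro x hx
    have h1 : ‖(inner ℂ (A x) x : ℂ)‖ ≤ ‖A x‖ := by
      calc ‖(inner ℂ (A x) x : ℂ)‖ ≤ ‖A x‖ * ‖x‖ := norm_inner_le_norm _ _
        _ = ‖A x‖ := by rw [hx, mul_one]
    have h2 : ‖(inner ℂ (A x) x : ℂ)‖ ≤ ‖adjoint A x‖ := by
      have e : (inner ℂ (A x) x : ℂ) = inner ℂ x (adjoint A x) :=
        (adjoint_inner_right A x x).symm
      rw [e]
      calc ‖(inner ℂ x (adjoint A x) : ℂ)‖ ≤ ‖x‖ * ‖adjoint A x‖ := norm_inner_le_norm _ _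
        _ = ‖adjoint A x‖ := by rw [hx, one_mul]
    have hsum : ‖A x‖^2 + ‖adjoint A x‖^2 ≤ ‖T‖ := by
      have e1 : (inner ℂ (T x) x : ℂ) = ((‖A x‖^2 + ‖adjoint A x‖^2 : ℝ) : ℂ) := by
        have k1 : (inner ℂ ((adjoint A) (A x)) x : ℂ) = inner ℂ (A x) (A x) :=
          adjoint_inner_left A x (A x)
        have k2 : (inner ℂ (A ((adjoint A) x)) x : ℂ)
            = inner ℂ ((adjoint A) x) ((adjoint A) x) := by
          rw [← adjoint_inner_right]
        rw [hT]
        simp only [add_apply, mul_apply_eq_comp, inner_add_left, k1, k2,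
          inner_self_eq_norm_sq_to_K]
        norm_cast
      have e2 : ‖A x‖^2 + ‖adjoint A x‖^2 = ‖(inner ℂ (T x) x : ℂ)‖ := by
        rw [e1, Complex.norm_real, Real.norm_of_nonneg (by positivity)]
      rw [e2]
      calc ‖(inner ℂ (T x) x : ℂ)‖ ≤ ‖T x‖ * ‖x‖ := norm_inner_le_norm _ _
        _ ≤ ‖T‖ * ‖x‖ * ‖x‖ := by
            gcongr
            exact le_opNorm T x
        _ = ‖T‖ := by rw [hx]; ring
    nlinarith [mul_le_mul h1 h2 (norm_nonneg (inner ℂ (A x) x : ℂ)) (norm_nonneg (A x)),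
      sq_nonneg (‖A x‖ - ‖adjoint A x‖), norm_nonneg (inner ℂ (A x) x : ℂ)]
  have hle : numRad A ≤ Real.sqrt ((1/2) * ‖T‖) := by
    apply Real.sSup_le
    · rintro r ⟨x, hx, rfl⟩
      exact (Real.le_sqrt (norm_nonneg _) hC).mpr (key x hx)
    · exact Real.sqrt_nonneg _
  have hnn : 0 ≤ numRad A := by
    apply Real.sSup_nonneg
    rintro r ⟨x, hx, rfl⟩
    exact norm_nonneg _
  calc numRad A ^ 2 ≤ Real.sqrt ((1/2) * ‖T‖) ^ 2 := pow_le_pow_left₀ hnn hle 2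
    _ = (1/2) * ‖T‖ := Real.sq_sqrt hC
end

section
/- Let A, B ∈ B(H) and let T = [[0, A],[B, 0]] act on H ⊕ H by T(x ⊕ y) = (Ay) ⊕ (Bx). Then w(T) ≤ (1/2)(‖A‖ + ‖B‖). -/
open ContinuousLinearMap

theorem block_numRad_le {H : Type*} [NormedAddCommGroup H] [InnerProductSpace ℂ H]
    [CompleteSpace H] (A B : H →L[ℂ] H)
    (T : WithLp 2 (H × H) →L[ℂ] WithLp 2 (H × H))
    (hT : ∀ x y : H, T ((WithLp.equiv 2 (H × H)).symm (x, y)) =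
      (WithLp.equiv 2 (H × H)).symm (A y, B x)) :
    numRad T ≤ (1 / 2) * (‖A‖ + ‖B‖) := by
  have hb : (0:ℝ) ≤ (1 / 2) * (‖A‖ + ‖B‖) := by positivity
  apply Real.sSup_le _ hb
  rintro r ⟨z, hz, rfl⟩
  obtain ⟨⟨x, y⟩⟩ := z
  have hz2 : ‖x‖ ^ 2 + ‖y‖ ^ 2 = 1 := by
    have := WithLp.prod_norm_sq_eq_of_L2 (WithLp.toLp 2 (x, y) : WithLp 2 (H × H))
    simpa [hz] using this.symm
  have hTz : T (WithLp.toLp 2 (x, y) : WithLp 2 (H × H)) = (WithLp.equiv 2 (H × H)).symm (A y, B x) := by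
    have := hT x y
    simpa using this
  have hinner : (inner ℂ (T (WithLp.toLp 2 (x, y) : WithLp 2 (H × H))) (WithLp.toLp 2 (x, y) : WithLp 2 (H × H)) : ℂ)
      = inner ℂ (A y) x + inner ℂ (B x) y := by
    rw [hTz, WithLp.prod_inner_apply]
    rfl
  calc ‖(inner ℂ (T (WithLp.toLp 2 (x, y) : WithLp 2 (H × H))) (WithLp.toLp 2 (x, y) : WithLp 2 (H × H)) : ℂ)‖
      ≤ ‖(inner ℂ (A y) x : ℂ)‖ + ‖(inner ℂ (B x) y : ℂ)‖ := by
        rw [hinner]; exact norm_add_le _ _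
    _ ≤ ‖A‖ * ‖y‖ * ‖x‖ + ‖B‖ * ‖x‖ * ‖y‖ := by
        gcongr
        · exact (norm_inner_le_norm _ _).trans (by gcongr; exact (A.le_opNorm y))
        · exact (norm_inner_le_norm _ _).trans (by gcongr; exact (B.le_opNorm x))
    _ = (‖A‖ + ‖B‖) * (‖x‖ * ‖y‖) := by ring
    _ ≤ (‖A‖ + ‖B‖) * (1/2) := by
        gcongr
        nlinarith [sq_nonneg (‖x‖ - ‖y‖)]
    _ = (1 / 2) * (‖A‖ + ‖B‖) := by ring
end

section
/- For every bounded linear operator A on a complex Hilbert space and every unit vector x, |⟨Ax, x⟩|² ≤ (1/4)⟨(|A|² + |A*|²)x, x⟩ + (1/2)|⟨ |A*| |A| x, x⟩|, where |A| = (A*A)^{1/2} and |A*| = (AA*)^{1/2}. -/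
open ContinuousLinearMap

set_option maxHeartbeats 2000000
set_option synthInstance.maxHeartbeats 1000000

local notation "⟪" x ", " y "⟫" => @inner ℂ _ _ x y

lemma buzano_aux {H : Type*} [NormedAddCommGroup H] [InnerProductSpace ℂ H]
    (a b x : H) (hx : ‖x‖ = 1) :
    2 * ‖⟪a, x⟫ * ⟪x, b⟫‖ ≤ ‖a‖ * ‖b‖ + ‖⟪a, b⟫‖ := by
  set c : ℂ := ⟪x, b⟫ with hc
  set r : H := (2 * c) • x - b with hr
  have hxx : ⟪x, x⟫ = 1 := by
    rw [@inner_self_eq_norm_sq_to_K ℂ]; rw [hx]; norm_num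
  have hrr : ⟪r, r⟫ = ⟪b, b⟫ := by
    simp only [hr, inner_sub_sub_self, inner_smul_left, inner_smul_right, hxx]
    rw [← hc]
    have hbx : ⟪b, x⟫ = starRingEnd ℂ c := by rw [hc, ← inner_conj_symm]
    rw [hbx]
    simp only [map_mul, map_ofNat]
    ring
  have hnr : ‖r‖ = ‖b‖ := by
    have h2 : (‖r‖ : ℝ) ^ 2 = (‖b‖ : ℝ) ^ 2 := by
      rw [← @inner_self_eq_norm_sq ℂ, ← @inner_self_eq_norm_sq ℂ, hrr]
    nlinarith [norm_nonneg r, norm_nonneg b]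
  have har : ⟪a, r⟫ = 2 * c * ⟪a, x⟫ - ⟪a, b⟫ := by
    simp [hr, inner_sub_right, inner_smul_right]
  have key : 2 * (⟪a, x⟫ * c) = ⟪a, r⟫ + ⟪a, b⟫ := by rw [har]; ring
  calc 2 * ‖⟪a, x⟫ * c‖ = ‖2 * (⟪a, x⟫ * c)‖ := by
        rw [norm_mul]; simp
    _ = ‖⟪a, r⟫ + ⟪a, b⟫‖ := by rw [key]
    _ ≤ ‖⟪a, r⟫‖ + ‖⟪a, b⟫‖ := norm_add_le _ _
    _ ≤ ‖a‖ * ‖r‖ + ‖⟪a, b⟫‖ := by gcongr; exact norm_inner_le_norm a r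
    _ = ‖a‖ * ‖b‖ + ‖⟪a, b⟫‖ := by rw [hnr]

lemma mixed_schwarz_diag {H : Type*} [NormedAddCommGroup H] [InnerProductSpace ℂ H]
    [CompleteSpace H] (A P Q : H →L[ℂ] H)
    (hP : P.IsPositive) (hP2 : P * P = adjoint A * A)
    (hQ : Q.IsPositive) (hQ2 : Q * Q = A * adjoint A)
    (x : H) :
    ‖⟪A x, x⟫‖ ^ 2 ≤ (⟪P x, x⟫).re * (⟪Q x, x⟫).re := by
  have hPsym : ∀ u v : H, ⟪P u, v⟫ = ⟪u, P v⟫ :=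
    fun u v => (isSelfAdjoint_iff_isSymmetric.mp hP.isSelfAdjoint) u v
  -- norms agree
  have hnorm : ∀ y : H, ‖A y‖ = ‖P y‖ := by
    intro y
    have h1 : ‖A y‖ ^ 2 = ‖P y‖ ^ 2 := by
      have hA := A.apply_norm_sq_eq_inner_adjoint_left y
      have hPp := P.apply_norm_sq_eq_inner_adjoint_left y
      have hPa : adjoint P = P := hP.isSelfAdjoint
      rw [hA, hPp, hPa]
      congr 1
      have : (P ∘L P) = (adjoint A ∘L A) := hP2
      rw [this]
    nlinarith [norm_nonneg (A y), norm_nonneg (P y)]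
  -- the submodules
  set Pl := (P : H →ₗ[ℂ] H) with hPl
  set N : Submodule ℂ H := LinearMap.range Pl with hN
  set M : Submodule ℂ H := N.topologicalClosure with hM
  haveI : CompleteSpace M := (Submodule.isClosed_topologicalClosure N).completeSpace_coe
  have hNM : N ≤ M := Submodule.le_topologicalClosure N
  -- the densely defined isometry
  have hker : LinearMap.ker Pl ≤ LinearMap.ker (A : H →ₗ[ℂ] H) := by
    intro y hy
    simp only [LinearMap.mem_ker] at hy ⊢
    have := hnorm y
    have hy' : P y = 0 := hy
    rw [hy', norm_zero, norm_eq_zero] at this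
    exact this
  set u₀ : N →ₗ[ℂ] H :=
    ((LinearMap.ker Pl).liftQ (A : H →ₗ[ℂ] H) hker).comp
      (LinearMap.quotKerEquivRange Pl).symm.toLinearMap with hu₀def
  have hu₀ : ∀ y : H, u₀ ⟨P y, ⟨y, rfl⟩⟩ = A y := by
    intro y
    have hsymm : (LinearMap.quotKerEquivRange Pl).symm ⟨Pl y, ⟨y, rfl⟩⟩ =
        (LinearMap.ker Pl).mkQ y := LinearMap.quotKerEquivRange_symm_apply_image Pl y ⟨y, rfl⟩
    show u₀ ⟨Pl y, ⟨y, rfl⟩⟩ = A y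
    simp only [hu₀def, LinearMap.comp_apply, LinearEquiv.coe_toLinearMap, hsymm,
      Submodule.mkQ_apply, Submodule.liftQ_apply, ContinuousLinearMap.coe_coe]
  have hu₀norm : ∀ z : N, ‖u₀ z‖ = ‖z‖ := by
    rintro ⟨z, y, rfl⟩
    have h1 : u₀ ⟨Pl y, ⟨y, rfl⟩⟩ = A y := hu₀ y
    rw [h1]
    rw [Submodule.coe_norm]
    exact hnorm y
  -- bundle as a linear isometry and extend
  set U₀ : N →ₗᵢ[ℂ] H := ⟨u₀, hu₀norm⟩ with hU₀def
  set f : N →L[ℂ] H := U₀.toContinuousLinearMap with hfdef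
  set eincl : N →ₗᵢ[ℂ] M := ⟨Submodule.inclusion hNM, fun z => rfl⟩ with hedef
  set e : N →L[ℂ] M := eincl.toContinuousLinearMap with hedef2
  have hdense : DenseRange e := by
    intro m
    rw [closure_subtype]
    have himg : (((↑) : M → H) '' Set.range ⇑e : Set H) = (N : Set H) := by
      ext z
      constructor
      · rintro ⟨w, ⟨n, rfl⟩, rfl⟩
        exact n.2
      · rintro hz
        exact ⟨e ⟨z, hz⟩, ⟨⟨z, hz⟩, rfl⟩, rfl⟩
    rw [himg]
    have hm2 : (m : H) ∈ closure (N : Set H) := by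
      have h3 : (m : H) ∈ (N.topologicalClosure : Set H) := m.2
      rwa [Submodule.topologicalClosure_coe] at h3
    exact hm2
  -- extend to the closure
  have hui : IsUniformInducing ⇑e := eincl.isometry.isUniformInducing
  set Uhat : M →L[ℂ] H := f.extend e with hUhatdef
  have hUhat_e : ∀ z : N, Uhat (e z) = f z := fun z =>
    ContinuousLinearMap.extend_eq f hdense hui z
  have hUhatnorm : ∀ m : M, ‖Uhat m‖ = ‖m‖ := by
    have hclosed : IsClosed {m : M | ‖Uhat m‖ = ‖m‖} :=
      isClosed_eq (Uhat.continuous.norm) continuous_norm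
    intro m
    refine hdense.induction_on m hclosed ?_
    intro z
    rw [hUhat_e z]
    have h1 : ‖f z‖ = ‖z‖ := U₀.norm_map z
    have h2 : ‖e z‖ = ‖z‖ := eincl.norm_map z
    rw [h1, h2]
  -- the partial isometry U on all of H
  set Uli : M →ₗᵢ[ℂ] H := ⟨(Uhat : M →ₗ[ℂ] H), hUhatnorm⟩ with hUlidef
  set U : H →L[ℂ] H := Uhat.comp (M.orthogonalProjectionOnto) with hUdef
  have hUapply : ∀ u : H, U u = Uhat (M.orthogonalProjectionOnto u) := fun u => rfl
  have hUP : ∀ y : H, U (P y) = A y := by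
    intro y
    have hmem : P y ∈ M := hNM ⟨y, rfl⟩
    have h1 : M.orthogonalProjectionOnto (P y) = ⟨P y, hmem⟩ :=
      Submodule.orthogonalProjectionOnto_mem_subspace_eq_self (⟨P y, hmem⟩ : M)
    rw [hUapply, h1]
    have h2 : (⟨P y, hmem⟩ : M) = e ⟨P y, ⟨y, rfl⟩⟩ := rfl
    rw [h2, hUhat_e]
    exact hu₀ y
  haveI : Submodule.HasOrthogonalProjection M := inferInstance
  have hinner : ∀ u v : H, ⟪U u, U v⟫ = ⟪(M.orthogonalProjectionOnto u : H), v⟫ := by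
    intro u v
    rw [hUapply, hUapply]
    have h1 : ⟪Uli (M.orthogonalProjectionOnto u), Uli (M.orthogonalProjectionOnto v)⟫ =
        (inner (𝕜 := ℂ) (M.orthogonalProjectionOnto u) (M.orthogonalProjectionOnto v)) :=
      Uli.inner_map_map _ _
    have h2 : Uli (M.orthogonalProjectionOnto u) = Uhat (M.orthogonalProjectionOnto u) := rfl
    have h3 : Uli (M.orthogonalProjectionOnto v) = Uhat (M.orthogonalProjectionOnto v) := rfl
    rw [h2, h3] at h1
    rw [h1]
    exact Submodule.inner_orthogonalProjectionOnto_eq_of_mem_left (K := M) (M.orthogonalProjectionOnto u) v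
  -- operator identities
  have hprojP : ∀ y : H, ((M.orthogonalProjectionOnto (P y) : M) : H) = P y := by
    intro y
    have hmem : P y ∈ M := hNM ⟨y, rfl⟩
    have h1 : M.orthogonalProjectionOnto (P y) = ⟨P y, hmem⟩ :=
      Submodule.orthogonalProjectionOnto_mem_subspace_eq_self (⟨P y, hmem⟩ : M)
    rw [h1]
  have hUPmul : U * P = A := by
    ext y; exact hUP y
  have hPadj : adjoint P = P := hP.isSelfAdjoint
  have hUUP : ∀ w : H, adjoint U (U (P w)) = P w := by
    intro w
    refine ext_inner_right ℂ fun v => ?_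
    rw [adjoint_inner_left, hinner (P w) v, hprojP w]
  set C : H →L[ℂ] H := U * P * adjoint U with hCdef
  have hCC : C * C = A * adjoint A := by
    have hkey : adjoint U * (U * (P * adjoint U)) = P * adjoint U := by
      ext y
      show adjoint U (U (P (adjoint U y))) = P (adjoint U y)
      exact hUUP (adjoint U y)
    have hAadj : adjoint A = P * adjoint U := by
      rw [← hUPmul]
      rw [show U * P = U ∘L P from rfl, adjoint_comp, hPadj]
      rfl
    calc C * C = U * (P * (adjoint U * (U * (P * adjoint U)))) := by
          simp only [hCdef, mul_assoc]
      _ = U * (P * (P * adjoint U)) := by rw [hkey]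
      _ = A * adjoint A := by rw [hAadj, ← hUPmul]; simp only [mul_assoc]
  have hCpos : C.IsPositive := by
    have h := hP.conj_adjoint U
    have heq : C = U ∘L P ∘L adjoint U := by
      rw [hCdef]; rfl
    rw [heq]; exact h
  have hQ0 : (0 : H →L[ℂ] H) ≤ Q := Q.nonneg_iff_isPositive.mpr hQ
  have hC0 : (0 : H →L[ℂ] H) ≤ C := C.nonneg_iff_isPositive.mpr hCpos
  have hQC : Q = C := by
    have h1 : CFC.sqrt (A * adjoint A) = Q := CFC.sqrt_unique hQ2 hQ0
    have h2 : CFC.sqrt (A * adjoint A) = C := CFC.sqrt_unique hCC hC0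
    rw [← h1, h2]
  -- square root of P
  have hP0 : (0 : H →L[ℂ] H) ≤ P := P.nonneg_iff_isPositive.mpr hP
  set S : H →L[ℂ] H := CFC.sqrt P with hSdef
  have hS0 : (0 : H →L[ℂ] H) ≤ S := CFC.sqrt_nonneg P
  have hS2 : S * S = P := CFC.sqrt_mul_sqrt_self P hP0
  have hSpos : S.IsPositive := S.nonneg_iff_isPositive.mp hS0
  have hSsym : ∀ u v : H, ⟪S u, v⟫ = ⟪u, S v⟫ :=
    fun u v => (isSelfAdjoint_iff_isSymmetric.mp hSpos.isSelfAdjoint) u v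
  -- the mixed Schwarz estimate
  have hstep : ⟪A x, x⟫ = ⟪S x, S (adjoint U x)⟫ := by
    have h1 : ⟪A x, x⟫ = ⟪U (P x), x⟫ := by rw [hUP x]
    have h2 : ⟪U (P x), x⟫ = ⟪P x, adjoint U x⟫ := (adjoint_inner_right U (P x) x).symm
    have h3 : P x = S (S x) := by rw [← hS2]; rfl
    rw [h1, h2, h3, hSsym (S x) (adjoint U x)]
  have hSx : ‖S x‖ ^ 2 = (⟪P x, x⟫).re := by
    have hss : S (S x) = P x := by rw [← hS2]; rfl
    have h0 : ⟪S x, S x⟫ = ⟪P x, x⟫ := by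
      rw [← hSsym (S x) x, hss]
    calc ‖S x‖ ^ 2 = RCLike.re ⟪S x, S x⟫ := (inner_self_eq_norm_sq (𝕜 := ℂ) (S x)).symm
      _ = (⟪P x, x⟫).re := by rw [h0]; simp [RCLike.re_to_complex]
  have hSUx : ‖S (adjoint U x)‖ ^ 2 = (⟪Q x, x⟫).re := by
    have hss : S (S (adjoint U x)) = P (adjoint U x) := by rw [← hS2]; rfl
    have h3 : U (P (adjoint U x)) = C x := by rw [hCdef]; rfl
    have h0 : ⟪S (adjoint U x), S (adjoint U x)⟫ = ⟪Q x, x⟫ := by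
      rw [← hSsym (S (adjoint U x)) (adjoint U x), hss,
        adjoint_inner_right U (P (adjoint U x)) x, h3, hQC]
    calc ‖S (adjoint U x)‖ ^ 2 = RCLike.re ⟪S (adjoint U x), S (adjoint U x)⟫ :=
          (inner_self_eq_norm_sq (𝕜 := ℂ) _).symm
      _ = (⟪Q x, x⟫).re := by rw [h0]; simp [RCLike.re_to_complex]
  calc ‖⟪A x, x⟫‖ ^ 2 = ‖⟪S x, S (adjoint U x)⟫‖ ^ 2 := by rw [hstep]
    _ ≤ (‖S x‖ * ‖S (adjoint U x)‖) ^ 2 := by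
        have := norm_inner_le_norm (𝕜 := ℂ) (S x) (S (adjoint U x))
        exact pow_le_pow_left₀ (norm_nonneg _) this 2
    _ = ‖S x‖ ^ 2 * ‖S (adjoint U x)‖ ^ 2 := by ring
    _ = (⟪P x, x⟫).re * (⟪Q x, x⟫).re := by rw [hSx, hSUx]

theorem pointwise_refined_bound {H : Type*} [NormedAddCommGroup H] [InnerProductSpace ℂ H]
    [CompleteSpace H] (A P Q : H →L[ℂ] H)
    (hP : P.IsPositive) (hP2 : P * P = adjoint A * A)
    (hQ : Q.IsPositive) (hQ2 : Q * Q = A * adjoint A)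
    (x : H) (hx : ‖x‖ = 1) :
    ‖(inner ℂ (A x) x : ℂ)‖ ^ 2 ≤
      (1 / 4) * (inner ℂ ((adjoint A * A + A * adjoint A) x) x : ℂ).re +
        (1 / 2) * ‖(inner ℂ ((Q * P) x) x : ℂ)‖ := by
  have hPsym : ∀ u v : H, ⟪P u, v⟫ = ⟪u, P v⟫ :=
    fun u v => (isSelfAdjoint_iff_isSymmetric.mp hP.isSelfAdjoint) u v
  have hQsym : ∀ u v : H, ⟪Q u, v⟫ = ⟪u, Q v⟫ :=
    fun u v => (isSelfAdjoint_iff_isSymmetric.mp hQ.isSelfAdjoint) u v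
  have hms := mixed_schwarz_diag A P Q hP hP2 hQ hQ2 x
  set p : ℝ := (⟪P x, x⟫).re with hp
  set q : ℝ := (⟪Q x, x⟫).re with hq
  have hp0 : 0 ≤ p := by
    have := hP.inner_nonneg_left x
    exact (Complex.nonneg_iff.mp this).1
  have hq0 : 0 ≤ q := by
    have := hQ.inner_nonneg_left x
    exact (Complex.nonneg_iff.mp this).1
  have hple : p ≤ ‖⟪P x, x⟫‖ := by
    calc p ≤ |(⟪P x, x⟫).re| := le_abs_self _
      _ ≤ ‖⟪P x, x⟫‖ := by
        exact Complex.abs_re_le_norm _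
  have hqle : q ≤ ‖⟪x, Q x⟫‖ := by
    have h1 : (⟪x, Q x⟫).re = q := by
      have h2 := inner_re_symm (𝕜 := ℂ) x (Q x)
      simpa [hq, RCLike.re_to_complex] using h2
    calc q = (⟪x, Q x⟫).re := h1.symm
      _ ≤ |(⟪x, Q x⟫).re| := le_abs_self _
      _ ≤ ‖⟪x, Q x⟫‖ := by
        exact Complex.abs_re_le_norm _
  have hpq : p * q ≤ ‖⟪P x, x⟫‖ * ‖⟪x, Q x⟫‖ :=
    mul_le_mul hple hqle hq0 (norm_nonneg _)
  have hbuz := buzano_aux (P x) (Q x) x hx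
  have hQPinner : ⟪(Q * P) x, x⟫ = ⟪P x, Q x⟫ := by
    have h1 : (Q * P) x = Q (P x) := rfl
    rw [h1, hQsym (P x) x]
  have hprod : ‖⟪P x, x⟫‖ * ‖⟪x, Q x⟫‖ = ‖⟪P x, x⟫ * ⟪x, Q x⟫‖ := (norm_mul _ _).symm
  have hamgm : ‖P x‖ * ‖Q x‖ ≤ (1 / 2) * (‖P x‖ ^ 2 + ‖Q x‖ ^ 2) := by
    nlinarith [sq_nonneg (‖P x‖ - ‖Q x‖)]
  have hfirst : (⟪(adjoint A * A + A * adjoint A) x, x⟫).re = ‖P x‖ ^ 2 + ‖Q x‖ ^ 2 := by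
    rw [← hP2, ← hQ2]
    have h1 : (P * P + Q * Q) x = P (P x) + Q (Q x) := rfl
    rw [h1, inner_add_left, Complex.add_re]
    have h2 : (⟪P (P x), x⟫).re = ‖P x‖ ^ 2 := by
      rw [hPsym (P x) x]
      have := inner_self_eq_norm_sq (𝕜 := ℂ) (P x)
      rw [← this]
      simp [RCLike.re_to_complex]
    have h3 : (⟪Q (Q x), x⟫).re = ‖Q x‖ ^ 2 := by
      rw [hQsym (Q x) x]
      have := inner_self_eq_norm_sq (𝕜 := ℂ) (Q x)
      rw [← this]
      simp [RCLike.re_to_complex]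
    rw [h2, h3]
  have hQPnorm : ‖⟪P x, Q x⟫‖ = ‖⟪(Q * P) x, x⟫‖ := by rw [hQPinner]
  calc ‖⟪A x, x⟫‖ ^ 2 ≤ p * q := hms
    _ ≤ ‖⟪P x, x⟫ * ⟪x, Q x⟫‖ := by rw [← hprod]; exact hpq
    _ ≤ (1 / 2) * (‖P x‖ * ‖Q x‖ + ‖⟪P x, Q x⟫‖) := by linarith [hbuz]
    _ ≤ (1 / 2) * ((1 / 2) * (‖P x‖ ^ 2 + ‖Q x‖ ^ 2) + ‖⟪(Q * P) x, x⟫‖) := by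
        rw [← hQPnorm]; linarith [hamgm]
    _ = (1 / 4) * (‖P x‖ ^ 2 + ‖Q x‖ ^ 2) + (1 / 2) * ‖⟪(Q * P) x, x⟫‖ := by ring
    _ = (1 / 4) * (⟪(adjoint A * A + A * adjoint A) x, x⟫).re
          + (1 / 2) * ‖⟪(Q * P) x, x⟫‖ := by rw [hfirst]
end

section
/- For every bounded linear operator A on a complex Hilbert space H and r ≥ 1, w(A)^{2r} ≤ (1/4)‖ |A|^{2r} + |A*|^{2r} ‖ + (1/2)‖A‖^{2r}, where |A|^{2r} and |A*|^{2r} are defined via continuous functional calculus on the positive operators |A| and |A*|. -/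
open ContinuousLinearMap

private lemma rpow_sq_comm' (u : ℝ) (hu : 0 ≤ u) (r : ℝ) : (u ^ r) ^ 2 = (u ^ 2) ^ r := by
  rw [← Real.rpow_natCast (u ^ r) 2, ← Real.rpow_natCast u 2, ← Real.rpow_mul hu,
    ← Real.rpow_mul hu, mul_comm]

private lemma rpow_two_mul' (u : ℝ) (hu : 0 ≤ u) (r : ℝ) : u ^ (2 * r) = (u ^ 2) ^ r := by
  rw [← Real.rpow_natCast u 2, ← Real.rpow_mul hu]
  norm_num

private lemma re_inner_smul' {H : Type*} [NormedAddCommGroup H] [InnerProductSpace ℂ H]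
    (a : ℝ) (v x : H) : ((inner ℂ (a • v) x : ℂ)).re = a * ((inner ℂ v x : ℂ)).re := by
  rw [RCLike.real_smul_eq_coe_smul (K := ℂ) a v, inner_smul_left]
  simp

/-- McCarthy-type inequality via the tangent line trick. -/
private lemma mccarthy {H : Type*} [NormedAddCommGroup H] [InnerProductSpace ℂ H]
    [CompleteSpace H] (P : H →L[ℂ] H) (hP : P.IsPositive) (r : ℝ) (hr : 1 ≤ r)
    (x : H) (hx : ‖x‖ = 1) :
    ((inner ℂ ((P * P) x) x : ℂ)).re ^ r ≤ ((inner ℂ ((CFC.rpow P (2 * r)) x) x : ℂ)).re := by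
  have hP0 : (0 : H →L[ℂ] H) ≤ P := (nonneg_iff_isPositive P).mpr hP
  have hsa : IsSelfAdjoint P := hP.isSelfAdjoint
  set c : ℝ := ((inner ℂ ((P * P) x) x : ℂ)).re with hc
  have hPP : (inner ℂ ((P * P) x) x : ℂ) = inner ℂ (P x) (P x) := by
    have h1 : (P * P) x = P (P x) := rfl
    rw [h1, ← hsa.adjoint_eq, adjoint_inner_left, hsa.adjoint_eq]
  have hc' : c = ‖P x‖ ^ 2 := by
    rw [hc, hPP, @inner_self_eq_norm_sq_to_K ℂ]
    norm_cast
  have hc0 : 0 ≤ c := hc' ▸ sq_nonneg _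
  have hRE : 0 ≤ ((inner ℂ ((CFC.rpow P (2 * r)) x) x : ℂ)).re := by
    have hpos : (0 : H →L[ℂ] H) ≤ CFC.rpow P (2 * r) := CFC.rpow_nonneg
    have := ((nonneg_iff_isPositive _).mp hpos).inner_nonneg_left x
    exact (Complex.nonneg_iff.mp this).1
  rcases eq_or_lt_of_le hc0 with h0 | hcpos
  · rw [← h0, Real.zero_rpow (by linarith)]
    exact hRE
  set a : ℝ := r * c ^ (r - 1) with ha
  set b : ℝ := (r - 1) * c ^ r with hb
  have hscalar : ∀ t : ℝ, 0 ≤ t → 0 ≤ t ^ (2 * r) - a * t ^ 2 + b := by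
    intro t ht
    have hz : -1 ≤ t ^ 2 / c - 1 := by
      have : 0 ≤ t ^ 2 / c := div_nonneg (sq_nonneg t) hcpos.le
      linarith
    have hber := one_add_mul_self_le_rpow_one_add hz hr
    have h1 : 1 + (t ^ 2 / c - 1) = t ^ 2 / c := by ring
    rw [h1] at hber
    have h2 : (t ^ 2 / c) ^ r = t ^ (2 * r) / c ^ r := by
      rw [Real.div_rpow (sq_nonneg t) hcpos.le, ← Real.rpow_natCast t 2, ← Real.rpow_mul ht]
      norm_num
    rw [h2] at hber
    have hcr : 0 < c ^ r := Real.rpow_pos_of_pos hcpos r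
    have hmul := mul_le_mul_of_nonneg_left hber hcr.le
    have h3 : c ^ r * (1 + r * (t ^ 2 / c - 1)) = c ^ r + r * (c ^ r / c) * t ^ 2 - r * c ^ r := by
      field_simp; ring
    have h4 : c ^ r / c = c ^ (r - 1) := by
      rw [← Real.rpow_sub_one hcpos.ne' r]
    have h5 : c ^ r * (t ^ (2 * r) / c ^ r) = t ^ (2 * r) := by
      field_simp
    rw [h3, h4, h5] at hmul
    simp only [ha, hb]
    nlinarith [hmul]
  have hcont : Continuous (fun t : ℝ => t ^ (2 * r)) := by
    rw [continuous_iff_continuousAt]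
    intro t
    rcases eq_or_ne t 0 with h | h
    · subst h; exact Real.continuousAt_rpow_const 0 (2 * r) (Or.inr (by linarith))
    · exact Real.continuousAt_rpow_const t (2 * r) (Or.inl h)
  have hcfc_nonneg : (0 : H →L[ℂ] H) ≤ cfc (fun t : ℝ => t ^ (2 * r) - a * t ^ 2 + b) P := by
    apply cfc_nonneg
    intro t ht
    exact hscalar t (spectrum_nonneg_of_nonneg hP0 ht)
  have hdecomp : cfc (fun t : ℝ => t ^ (2 * r) - a * t ^ 2 + b) P
      = CFC.rpow P (2 * r) - a • (P * P) + b • (1 : H →L[ℂ] H) := by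
    have h1 : cfc (fun t : ℝ => t ^ (2 * r) - a * t ^ 2 + b) P
        = cfc (fun t : ℝ => t ^ (2 * r) - a * t ^ 2) P + cfc (fun _ : ℝ => b) P :=
      cfc_add P _ _ ((hcont.sub (by fun_prop)).continuousOn) continuousOn_const
    have h2 : cfc (fun t : ℝ => t ^ (2 * r) - a * t ^ 2) P
        = cfc (fun t : ℝ => t ^ (2 * r)) P - cfc (fun t : ℝ => a * t ^ 2) P :=
      cfc_sub _ _ P hcont.continuousOn (by fun_prop)
    have h3 : cfc (fun t : ℝ => a * t ^ 2) P = a • (P * P) := by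
      rw [cfc_const_mul a (fun t : ℝ => t ^ 2) P (by fun_prop), cfc_pow_id (R := ℝ) P 2, sq]
    have h4 : cfc (fun _ : ℝ => b) P = b • (1 : H →L[ℂ] H) := by
      rw [cfc_const b P, Algebra.algebraMap_eq_smul_one]
    have h5 : cfc (fun t : ℝ => t ^ (2 * r)) P = CFC.rpow P (2 * r) := by
      rw [CFC.rpow, cfc_nnreal_eq_real _ P hP0]
      apply cfc_congr
      intro t ht
      have ht0 : 0 ≤ t := spectrum_nonneg_of_nonneg hP0 ht
      simp [NNReal.coe_rpow, Real.coe_toNNReal t ht0]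
    rw [h1, h2, h3, h4, h5]
  rw [hdecomp] at hcfc_nonneg
  have hinner : 0 ≤ ((inner ℂ ((CFC.rpow P (2 * r) - a • (P * P)
      + b • (1 : H →L[ℂ] H)) x) x : ℂ)).re := by
    have := ((nonneg_iff_isPositive _).mp hcfc_nonneg).inner_nonneg_left x
    exact (Complex.nonneg_iff.mp this).1
  have hx2 : ((inner ℂ x x : ℂ)).re = 1 := by
    rw [@inner_self_eq_norm_sq_to_K ℂ]
    norm_cast
    simp [hx]
  have hexpand : ((inner ℂ ((CFC.rpow P (2 * r) - a • (P * P) + b • (1 : H →L[ℂ] H)) x) x : ℂ)).re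
      = ((inner ℂ ((CFC.rpow P (2 * r)) x) x : ℂ)).re - a * c + b := by
    simp only [add_apply, sub_apply, smul_apply, ContinuousLinearMap.one_apply, inner_add_left, inner_sub_left,
      Complex.add_re, Complex.sub_re, re_inner_smul']
    rw [hx2, ← hc]
    ring
  rw [hexpand] at hinner
  have hac : a * c = r * c ^ r := by
    rw [ha, Real.rpow_sub_one hcpos.ne' r]
    field_simp
  rw [hac, hb] at hinner
  linarith

set_option maxHeartbeats 1000000 in
theorem numRad_rpow_bound {H : Type*} [NormedAddCommGroup H] [InnerProductSpace ℂ H]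
    [CompleteSpace H] (A P Q : H →L[ℂ] H)
    (hP : P.IsPositive) (hP2 : P * P = adjoint A * A)
    (hQ : Q.IsPositive) (hQ2 : Q * Q = A * adjoint A)
    (r : ℝ) (hr : 1 ≤ r) :
    numRad A ^ (2 * r) ≤
      (1 / 4) * ‖CFC.rpow P (2 * r) + CFC.rpow Q (2 * r)‖ + (1 / 2) * ‖A‖ ^ (2 * r) := by
  have hr0 : (0:ℝ) < r := lt_of_lt_of_le one_pos hr
  have h2r : (0:ℝ) < 2 * r := by linarith
  set S : H →L[ℂ] H := CFC.rpow P (2 * r) + CFC.rpow Q (2 * r) with hS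
  set B : ℝ := (1 / 4) * ‖S‖ + (1 / 2) * ‖A‖ ^ (2 * r) with hB
  have hB0 : (0:ℝ) ≤ B := by
    rw [hB]
    have h1 : (0:ℝ) ≤ ‖S‖ := norm_nonneg _
    have h2 : (0:ℝ) ≤ ‖A‖ ^ (2 * r) := Real.rpow_nonneg (norm_nonneg A) _
    linarith
  have key : ∀ x : H, ‖x‖ = 1 → ‖(inner ℂ (A x) x : ℂ)‖ ^ (2 * r) ≤ B := by
    intro x hx
    set t : ℝ := ‖(inner ℂ (A x) x : ℂ)‖ with htdef
    set u : ℝ := ‖A x‖ with hudef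
    set v : ℝ := ‖adjoint A x‖ with hvdef
    have ht0 : 0 ≤ t := norm_nonneg _
    have hu0 : 0 ≤ u := norm_nonneg _
    have hv0 : 0 ≤ v := norm_nonneg _
    have htu : t ≤ u := by
      have := norm_inner_le_norm (𝕜 := ℂ) (A x) x
      simpa [hx] using this
    have htv : t ≤ v := by
      have h1 : (inner ℂ ((adjoint A) x) x : ℂ) = inner ℂ x (A x) := adjoint_inner_left A x x
      have h2 : t = ‖(inner ℂ ((adjoint A) x) x : ℂ)‖ := by
        rw [h1, ← inner_conj_symm x (A x)]
        exact (RCLike.norm_conj _).symm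
      rw [h2]
      have := norm_inner_le_norm (𝕜 := ℂ) ((adjoint A) x) x
      simpa [hx] using this
    have hu1 : u ≤ ‖A‖ := by simpa [hx] using A.le_opNorm x
    have hv1 : v ≤ ‖A‖ := by
      have h := (adjoint A).le_opNorm x
      rw [LinearIsometryEquiv.norm_map adjoint A] at h
      simpa [hx] using h
    -- McCarthy bounds
    have hPu : ((inner ℂ ((P * P) x) x : ℂ)).re = u ^ 2 := by
      rw [hP2]
      have h1 : (adjoint A * A) x = adjoint A (A x) := rfl
      rw [h1, adjoint_inner_left, @inner_self_eq_norm_sq_to_K ℂ]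
      norm_cast
    have hQv : ((inner ℂ ((Q * Q) x) x : ℂ)).re = v ^ 2 := by
      rw [hQ2]
      have h1 : (A * adjoint A) x = A ((adjoint A) x) := rfl
      have h2 : A ((adjoint A) x) = (adjoint (adjoint A)) ((adjoint A) x) := by
        rw [adjoint_adjoint]
      rw [h1, h2, adjoint_inner_left, @inner_self_eq_norm_sq_to_K ℂ]
      norm_cast
    have hmcP := mccarthy P hP r hr x hx
    have hmcQ := mccarthy Q hQ r hr x hx
    rw [hPu] at hmcP
    rw [hQv] at hmcQ
    set REP : ℝ := ((inner ℂ ((CFC.rpow P (2 * r)) x) x : ℂ)).re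
    set REQ : ℝ := ((inner ℂ ((CFC.rpow Q (2 * r)) x) x : ℂ)).re
    -- (u^2)^r ≤ REP, (v^2)^r ≤ REQ
    have hSsum : REP + REQ ≤ ‖S‖ := by
      have h0 : (inner ℂ (S x) x : ℂ)
          = inner ℂ ((CFC.rpow P (2 * r)) x) x + inner ℂ ((CFC.rpow Q (2 * r)) x) x := by
        rw [hS, ContinuousLinearMap.add_apply, inner_add_left]
      have h1 : REP + REQ = ((inner ℂ (S x) x : ℂ)).re := by
        rw [h0, Complex.add_re]
      rw [h1]
      have h2 : ((inner ℂ (S x) x : ℂ)).re ≤ ‖(inner ℂ (S x) x : ℂ)‖ := Complex.re_le_norm _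
      have h3 : ‖(inner ℂ (S x) x : ℂ)‖ ≤ ‖S x‖ * ‖x‖ := norm_inner_le_norm _ _
      have h4 : ‖S x‖ ≤ ‖S‖ := by simpa [hx] using S.le_opNorm x
      rw [hx] at h3
      linarith
    -- numeric chain
    set a : ℝ := u ^ r with hadef
    set b : ℝ := v ^ r with hbdef
    have ha0 : 0 ≤ a := Real.rpow_nonneg hu0 r
    have hb0 : 0 ≤ b := Real.rpow_nonneg hv0 r
    have htab : t ^ (2 * r) ≤ a * b := by
      have h1 : t ^ 2 ≤ u * v := by nlinarith
      have h2 : (t ^ 2) ^ r ≤ (u * v) ^ r :=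
        Real.rpow_le_rpow (sq_nonneg t) h1 hr0.le
      rw [hadef, hbdef, ← Real.mul_rpow hu0 hv0, rpow_two_mul' t ht0]
      exact h2
    have ha2 : a ^ 2 ≤ REP := by rw [rpow_sq_comm' u hu0 r]; exact hmcP
    have hb2 : b ^ 2 ≤ REQ := by rw [rpow_sq_comm' v hv0 r]; exact hmcQ
    have habN : a * b ≤ ‖A‖ ^ (2 * r) := by
      have h1 : a ≤ ‖A‖ ^ r := Real.rpow_le_rpow hu0 hu1 hr0.le
      have h2 : b ≤ ‖A‖ ^ r := Real.rpow_le_rpow hv0 hv1 hr0.le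
      have h3 : a * b ≤ (‖A‖ ^ r) ^ 2 := by nlinarith
      rw [rpow_sq_comm' ‖A‖ (norm_nonneg A) r, ← rpow_two_mul' ‖A‖ (norm_nonneg A) r] at h3
      exact h3
    rw [hB]
    nlinarith [sq_nonneg (a - b), htab, habN, ha2, hb2, hSsum]
  -- Conclude via the supremum
  have hnn : 0 ≤ numRad A := by
    apply Real.sSup_nonneg
    rintro y ⟨x, hx, rfl⟩
    positivity
  have hup : numRad A ≤ B ^ (1 / (2 * r)) := by
    apply Real.sSup_le
    · rintro y ⟨x, hx, rfl⟩
      have hk := key x hx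
      have ht0 : (0:ℝ) ≤ ‖(inner ℂ (A x) x : ℂ)‖ := norm_nonneg _
      have h := Real.rpow_le_rpow (Real.rpow_nonneg ht0 _) hk
        (by positivity : (0:ℝ) ≤ 1 / (2 * r))
      rwa [← Real.rpow_mul ht0, mul_one_div, div_self h2r.ne', Real.rpow_one] at h
    · exact Real.rpow_nonneg hB0 _
  calc numRad A ^ (2 * r) ≤ (B ^ (1 / (2 * r))) ^ (2 * r) :=
        Real.rpow_le_rpow hnn hup h2r.le
    _ = B := by
        rw [← Real.rpow_mul hB0, one_div_mul_cancel h2r.ne', Real.rpow_one]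
end

section
/- Let A be a bounded linear operator on a complex Hilbert space with A² = 0. Then w(A) = (1/2)‖A‖. -/
open ContinuousLinearMap

section Aux

variable {H : Type*} [NormedAddCommGroup H] [InnerProductSpace ℂ H]

local notation "⟪" x ", " y "⟫" => @inner ℂ _ _ x y

lemma numRad_set_bdd (A : H →L[ℂ] H) :
    ∀ r ∈ {r : ℝ | ∃ x : H, ‖x‖ = 1 ∧ r = ‖(inner ℂ (A x) x : ℂ)‖}, r ≤ ‖A‖ := by
  rintro r ⟨x, hx, rfl⟩
  calc ‖(⟪A x, x⟫ : ℂ)‖ ≤ ‖A x‖ * ‖x‖ := norm_inner_le_norm _ _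
    _ ≤ (‖A‖ * ‖x‖) * ‖x‖ := by gcongr; exact A.le_opNorm x
    _ = ‖A‖ := by rw [hx]; ring

lemma numRad_nonneg (A : H →L[ℂ] H) : 0 ≤ numRad A :=
  Real.sSup_nonneg (by rintro r ⟨x, hx, rfl⟩; positivity)

lemma le_numRad (A : H →L[ℂ] H) (x : H) (hx : ‖x‖ = 1) :
    ‖(⟪A x, x⟫ : ℂ)‖ ≤ numRad A :=
  le_csSup ⟨‖A‖, fun r hr => numRad_set_bdd A r hr⟩ ⟨x, hx, rfl⟩

lemma inner_le_numRad (A : H →L[ℂ] H) (u : H) :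
    ‖(⟪A u, u⟫ : ℂ)‖ ≤ numRad A * ‖u‖ ^ 2 := by
  rcases eq_or_ne u 0 with rfl | hu
  · simp
  · have hn : (0:ℝ) < ‖u‖ := norm_pos_iff.mpr hu
    set x : H := ((‖u‖ : ℂ))⁻¹ • u with hxdef
    have hcn : ‖((‖u‖ : ℂ))⁻¹‖ = ‖u‖⁻¹ := by
      rw [norm_inv, Complex.norm_real, Real.norm_eq_abs, abs_of_pos hn]
    have hx : ‖x‖ = 1 := by
      rw [hxdef, norm_smul, hcn, inv_mul_cancel₀ hn.ne']
    have hinner : (⟪A x, x⟫ : ℂ)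
        = ((‖u‖ : ℂ))⁻¹ * (starRingEnd ℂ ((‖u‖ : ℂ))⁻¹) * ⟪A u, u⟫ := by
      rw [hxdef, map_smul, inner_smul_left, inner_smul_right]; ring
    have hnorm : ‖(⟪A x, x⟫ : ℂ)‖ = (‖u‖^2)⁻¹ * ‖(⟪A u, u⟫ : ℂ)‖ := by
      rw [hinner, norm_mul, norm_mul, RCLike.norm_conj, hcn]
      rw [pow_two, mul_inv]
    have h := le_numRad A x hx
    rw [hnorm] at h
    have h2 := mul_le_mul_of_nonneg_left h (le_of_lt (by positivity : (0:ℝ) < ‖u‖^2))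
    calc ‖(⟪A u, u⟫ : ℂ)‖ = ‖u‖^2 * ((‖u‖^2)⁻¹ * ‖(⟪A u, u⟫ : ℂ)‖) := by
          field_simp
      _ ≤ ‖u‖^2 * numRad A := h2
      _ = numRad A * ‖u‖^2 := by ring

lemma norm_le_two_numRad (A : H →L[ℂ] H) (hA : A * A = 0) :
    ‖A‖ ≤ 2 * numRad A := by
  have h2 : ∀ v : H, A (A v) = 0 := fun v => by
    have := congrArg (fun T : H →L[ℂ] H => T v) hA
    simpa [mul_apply] using this
  refine A.opNorm_le_bound (by have := numRad_nonneg A; linarith) ?_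
  intro x
  rcases eq_or_ne (A x) 0 with h0 | h0
  · rw [h0, norm_zero]
    exact mul_nonneg (by have := numRad_nonneg A; linarith) (norm_nonneg x)
  · have hAx : (0:ℝ) < ‖A x‖ := norm_pos_iff.mpr h0
    have hx : (0:ℝ) < ‖x‖ := by
      rcases eq_or_ne x 0 with rfl | hx
      · simp at h0
      · exact norm_pos_iff.mpr hx
    set c : ℝ := ‖x‖ / ‖A x‖ with hc
    set y : H := ((c : ℂ)) • A x with hy
    have hAy : A y = 0 := by rw [hy, map_smul, h2, smul_zero]
    have hny : ‖y‖ = ‖x‖ := by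
      rw [hy, norm_smul, Complex.norm_real, Real.norm_eq_abs,
        abs_of_pos (by positivity : (0:ℝ) < c), hc]
      field_simp
    have key : (⟪A (x+y), x+y⟫ : ℂ) - ⟪A (x-y), x-y⟫ = 2 * ⟪A x, y⟫ := by
      simp only [map_add, map_sub, inner_add_left, inner_add_right,
        inner_sub_left, inner_sub_right, hAy, inner_zero_left]
      ring
    have hAxC : ((‖A x‖ : ℝ) : ℂ) ≠ 0 := by exact_mod_cast hAx.ne'
    have hval : (⟪A x, y⟫ : ℂ) = ((‖x‖ * ‖A x‖ : ℝ) : ℂ) := by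
      rw [hy, inner_smul_right, inner_self_eq_norm_sq_to_K, hc]
      push_cast
      field_simp
      rfl
    have hbound : ‖(⟪A (x+y), x+y⟫ : ℂ) - ⟪A (x-y), x-y⟫‖
        ≤ numRad A * ‖x+y‖^2 + numRad A * ‖x-y‖^2 :=
      le_trans (norm_sub_le _ _) (add_le_add (inner_le_numRad A _) (inner_le_numRad A _))
    have hpar : ‖x+y‖^2 + ‖x-y‖^2 = 4 * ‖x‖^2 := by
      have := parallelogram_law_with_norm ℂ x y
      rw [hny] at this
      nlinarith [this]
    have hlhs : ‖(⟪A (x+y), x+y⟫ : ℂ) - ⟪A (x-y), x-y⟫‖ = 2 * (‖x‖ * ‖A x‖) := by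
      rw [key, hval, norm_mul]
      simp [Complex.norm_real, abs_of_nonneg (mul_nonneg hx.le hAx.le)]
    have hineq : 2 * (‖x‖ * ‖A x‖) ≤ numRad A * (4 * ‖x‖^2) := by
      rw [← hlhs]
      calc ‖(⟪A (x+y), x+y⟫ : ℂ) - ⟪A (x-y), x-y⟫‖
          ≤ numRad A * ‖x+y‖^2 + numRad A * ‖x-y‖^2 := hbound
        _ = numRad A * (‖x+y‖^2 + ‖x-y‖^2) := by ring
        _ = numRad A * (4 * ‖x‖^2) := by rw [hpar]
    nlinarith [hineq, hx, hAx]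

lemma numRad_le_half (A : H →L[ℂ] H) (hA : A * A = 0) :
    numRad A ≤ (1/2) * ‖A‖ := by
  have h2 : ∀ v : H, A (A v) = 0 := fun v => by
    have := congrArg (fun T : H →L[ℂ] H => T v) hA
    simpa [mul_apply] using this
  apply Real.sSup_le
  · rintro s ⟨x, hx, rfl⟩
    set l : ℂ := ⟪A x, x⟫ with hl
    set r : ℝ := ‖l‖ with hr
    rcases eq_or_lt_of_le (norm_nonneg l) with h0 | h0
    · rw [hr, ← h0]; positivity
    · have h0' : (0:ℝ) < r := h0
      have hAxn : r ≤ ‖A x‖ := by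
        calc r = ‖(⟪A x, x⟫ : ℂ)‖ := hr
          _ ≤ ‖A x‖ * ‖x‖ := norm_inner_le_norm _ _
          _ = ‖A x‖ := by rw [hx, mul_one]
      have hAx : (0:ℝ) < ‖A x‖ := lt_of_lt_of_le h0' hAxn
      set w : H := ((2 * r^2 : ℝ) : ℂ) • x - l • A x with hw
      have hAw : A w = ((2 * r^2 : ℝ) : ℂ) • A x := by
        rw [hw, map_sub, map_smul, map_smul, h2, smul_zero, sub_zero]
      have hip : (⟪x, A x⟫ : ℂ) = starRingEnd ℂ l := by
        rw [hl, ← inner_conj_symm]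
      have hinner2 : (⟪((2 * r^2 : ℝ) : ℂ) • x, l • A x⟫ : ℂ) = ((2 * r^4 : ℝ) : ℂ) :=
        calc (⟪((2 * r^2 : ℝ) : ℂ) • x, l • A x⟫ : ℂ)
            = starRingEnd ℂ ((2 * r^2 : ℝ) : ℂ) * (l * ⟪x, A x⟫) := by
              rw [inner_smul_left, inner_smul_right]
          _ = ((2 * r^2 : ℝ) : ℂ) * (l * starRingEnd ℂ l) := by
              rw [hip, Complex.conj_ofReal]
          _ = ((2 * r^4 : ℝ) : ℂ) := by
              rw [Complex.mul_conj', ← hr]; push_cast; ring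
      have hwsq : ‖w‖^2 = (r * ‖A x‖)^2 := by
        rw [hw, @norm_sub_sq ℂ, hinner2]
        rw [norm_smul, norm_smul, hx, mul_one]
        have h1 : ‖((2 * r^2 : ℝ) : ℂ)‖ = 2 * r^2 := by
          rw [Complex.norm_real, Real.norm_eq_abs, abs_of_nonneg (by positivity)]
        have h2' : ‖l‖ = r := hr.symm
        rw [h1, h2']
        simp
        rw [← Complex.ofReal_pow, Complex.ofReal_re]
        ring
      have hwn : ‖w‖ = r * ‖A x‖ := by
        nlinarith [norm_nonneg w, mul_nonneg h0'.le hAx.le, hwsq]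
      have hAwn : ‖A w‖ = 2 * r^2 * ‖A x‖ := by
        rw [hAw, norm_smul, Complex.norm_real, Real.norm_eq_abs,
          abs_of_nonneg (by positivity : (0:ℝ) ≤ 2 * r^2)]
      have hle : ‖A w‖ ≤ ‖A‖ * ‖w‖ := A.le_opNorm w
      rw [hAwn, hwn] at hle
      have hpos : 0 < r * ‖A x‖ := mul_pos h0' hAx
      have h5 : 2 * r ≤ ‖A‖ := by
        refine le_of_mul_le_mul_right ?_ hpos
        nlinarith [hle]
      linarith
  · positivity

end Aux

theorem numRad_of_sq_zero {H : Type*} [NormedAddCommGroup H] [InnerProductSpace ℂ H]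
    [CompleteSpace H] (A : H →L[ℂ] H) (hA : A * A = 0) :
    numRad A = (1 / 2) * ‖A‖ := by
  have h1 := numRad_le_half A hA
  have h2 := norm_le_two_numRad A hA
  linarith
end

section
/- For positive bounded operators P, Q on a complex Hilbert space and every unit vector x, ⟨Px, x⟩ · ⟨Qx, x⟩ ≤ (1/4)⟨(P² + Q²)x, x⟩ + (1/2)|⟨Qx, Px⟩|. -/
open ContinuousLinearMap

lemma buzano' {H : Type*} [NormedAddCommGroup H] [InnerProductSpace ℂ H]
    (a b x : H) (hx : ‖x‖ = 1) :
    2 * ‖(inner ℂ a x : ℂ) * inner ℂ x b‖ ≤ ‖a‖ * ‖b‖ + ‖(inner ℂ a b : ℂ)‖ := by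
  set u : H := (2 * (inner ℂ x a : ℂ)) • x - a with hu
  have hnu : ‖u‖ = ‖a‖ := by
    have h1 : ‖u‖ ^ 2 = ‖a‖ ^ 2 := by
      rw [hu, @norm_sub_sq ℂ]
      rw [inner_smul_left]
      simp [norm_smul, hx, inner_self_eq_norm_sq]
      ring_nf
      have hre : (inner ℂ a x : ℂ).re = (inner ℂ x a : ℂ).re := by
        simpa [RCLike.re_to_complex] using inner_re_symm (𝕜 := ℂ) a x
      have him : (inner ℂ a x : ℂ).im = -(inner ℂ x a : ℂ).im := by
        simpa [RCLike.im_to_complex] using inner_im_symm (𝕜 := ℂ) a x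
      simp only [hre, him, Complex.sq_norm, Complex.normSq_apply]
      ring
    calc ‖u‖ = Real.sqrt (‖u‖ ^ 2) := (Real.sqrt_sq (norm_nonneg u)).symm
      _ = Real.sqrt (‖a‖ ^ 2) := by rw [h1]
      _ = ‖a‖ := Real.sqrt_sq (norm_nonneg a)
  have hub : (inner ℂ u b : ℂ) = 2 * inner ℂ a x * inner ℂ x b - inner ℂ a b := by
    rw [hu, inner_sub_left, inner_smul_left, map_mul, inner_conj_symm, map_ofNat]

  have hcs : ‖(inner ℂ u b : ℂ)‖ ≤ ‖a‖ * ‖b‖ := by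
    rw [← hnu]; exact norm_inner_le_norm u b
  calc 2 * ‖(inner ℂ a x : ℂ) * inner ℂ x b‖
      = ‖(2 : ℂ) * (inner ℂ a x * inner ℂ x b)‖ := by rw [norm_mul]; simp
    _ = ‖(inner ℂ u b : ℂ) + inner ℂ a b‖ := by rw [hub]; ring_nf
    _ ≤ ‖(inner ℂ u b : ℂ)‖ + ‖(inner ℂ a b : ℂ)‖ := norm_add_le _ _
    _ ≤ ‖a‖ * ‖b‖ + ‖(inner ℂ a b : ℂ)‖ := by linarith

theorem positive_amgm_buzano {H : Type*} [NormedAddCommGroup H] [InnerProductSpace ℂ H]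
    [CompleteSpace H] (P Q : H →L[ℂ] H) (hP : P.IsPositive) (hQ : Q.IsPositive)
    (x : H) (hx : ‖x‖ = 1) :
    (inner ℂ (P x) x : ℂ).re * (inner ℂ (Q x) x : ℂ).re ≤
      (1 / 4) * (inner ℂ ((P * P + Q * Q) x) x : ℂ).re +
        (1 / 2) * ‖(inner ℂ (Q x) (P x) : ℂ)‖ := by
  have hsymP := hP.isSelfAdjoint.isSymmetric
  have hsymQ := hQ.isSelfAdjoint.isSymmetric
  -- step 4: identify re⟨(P²+Q²)x,x⟩
  have hPP : (inner ℂ ((P * P) x) x : ℂ) = (‖P x‖ : ℂ) ^ 2 := by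
    have h := hsymP (P x) x
    simp only [mul_apply, ContinuousLinearMap.coe_coe] at h ⊢
    rw [show (P * P) x = P (P x) from rfl, h, inner_self_eq_norm_sq_to_K]
    norm_cast
  have hQQ : (inner ℂ ((Q * Q) x) x : ℂ) = (‖Q x‖ : ℂ) ^ 2 := by
    have h := hsymQ (Q x) x
    simp only [mul_apply, ContinuousLinearMap.coe_coe] at h ⊢
    rw [show (Q * Q) x = Q (Q x) from rfl, h, inner_self_eq_norm_sq_to_K]
    norm_cast
  have hsum : (inner ℂ ((P * P + Q * Q) x) x : ℂ).re = ‖P x‖ ^ 2 + ‖Q x‖ ^ 2 := by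
    rw [add_apply, inner_add_left, hPP, hQQ]
    norm_cast
  -- step 1: bound product of real parts by product of norms
  have h1 : (inner ℂ (P x) x : ℂ).re * (inner ℂ (Q x) x : ℂ).re ≤
      ‖(inner ℂ (P x) x : ℂ)‖ * ‖(inner ℂ (x) (Q x) : ℂ)‖ := by
    have hp0 : 0 ≤ (inner ℂ (P x) x : ℂ).re := by
      simpa using (Complex.le_def.mp (hP.inner_nonneg_left x)).1
    have hq0 : 0 ≤ (inner ℂ (Q x) x : ℂ).re := by
      simpa using (Complex.le_def.mp (hQ.inner_nonneg_left x)).1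
    have e : ‖(inner ℂ x (Q x) : ℂ)‖ = ‖(inner ℂ (Q x) x : ℂ)‖ := norm_inner_symm x (Q x)
    rw [e]
    exact mul_le_mul (Complex.re_le_norm _) (Complex.re_le_norm _) hq0 (norm_nonneg _)
  -- step 2: Buzano
  have h2 := buzano' (P x) (Q x) x hx
  have h2' : ‖(inner ℂ (P x) x : ℂ)‖ * ‖(inner ℂ x (Q x) : ℂ)‖ ≤
      (‖P x‖ * ‖Q x‖ + ‖(inner ℂ (Q x) (P x) : ℂ)‖) / 2 := by
    have e2 : ‖(inner ℂ (P x) (Q x) : ℂ)‖ = ‖(inner ℂ (Q x) (P x) : ℂ)‖ := norm_inner_symm _ _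
    rw [← norm_mul]
    linarith [h2, e2.symm.le, e2.le]
  -- step 3: AM-GM
  have h3 : ‖P x‖ * ‖Q x‖ ≤ (‖P x‖ ^ 2 + ‖Q x‖ ^ 2) / 2 := by
    nlinarith [sq_nonneg (‖P x‖ - ‖Q x‖)]
  rw [hsum] at *
  have e2 : ‖(inner ℂ (P x) (Q x) : ℂ)‖ = ‖(inner ℂ (Q x) (P x) : ℂ)‖ := norm_inner_symm _ _
  rw [e2] at h2
  calc (inner ℂ (P x) x : ℂ).re * (inner ℂ (Q x) x : ℂ).re
      ≤ ‖(inner ℂ (P x) x : ℂ)‖ * ‖(inner ℂ (x) (Q x) : ℂ)‖ := h1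
    _ ≤ (‖P x‖ * ‖Q x‖ + ‖(inner ℂ (Q x) (P x) : ℂ)‖) / 2 := h2'
    _ ≤ ((‖P x‖ ^ 2 + ‖Q x‖ ^ 2) / 2 + ‖(inner ℂ (Q x) (P x) : ℂ)‖) / 2 := by linarith
    _ = (1 / 4) * (‖P x‖ ^ 2 + ‖Q x‖ ^ 2) + (1 / 2) * ‖(inner ℂ (Q x) (P x) : ℂ)‖ := by ring
end
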